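/- arXiv:math/0203106 — 2 statements merged into one kernel-verified Lean document; each statement's English description precedes it below -/
import Mathlib

section
/- Let k be a field and A₀ a finitely generated commutative k-algebra. Then the functor from the category of commutative k-algebras to sets given by R ↦ Hom_{k-alg}(A₀, R[[t]]), with functoriality induced by applying a ring homomorphism R → R' coefficientwise to power series, is corepresentable: there exist a commutative k-algebra A_∞ and bijections Hom_{k-alg}(A_∞, R) ≅ Hom_{k-alg}(A₀, R[[t]]) natural in R. (This expresses that the arc space 𝔏(X) of an affine k-variety X = Spec A₀ is an affine k-scheme representing the functor R ↦ X(R[[t]]).) -/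
open MvPolynomial

set_option maxHeartbeats 1000000
set_option synthInstance.maxHeartbeats 400000

namespace ArcSpaceAux

universe u

variable (k : Type u) [Field k] (A₀ : Type u) [CommRing A₀] [Algebra k A₀]

/-- Relations: the variable `X (a, n)` stands for the `n`-th coefficient of the image of `a`. -/
noncomputable def gens : Set (MvPolynomial (A₀ × ℕ) k) :=
  {p | ∃ a b n, p = X (a + b, n) - X (a, n) - X (b, n)} ∪
  {p | ∃ a b n, p = X (a * b, n) -
      ∑ q ∈ Finset.HasAntidiagonal.antidiagonal n, X (a, q.1) * X (b, q.2)} ∪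
  {p | ∃ (c : k) (n : ℕ), p = X (algebraMap k A₀ c, n) - if n = 0 then C c else 0}

noncomputable def I : Ideal (MvPolynomial (A₀ × ℕ) k) := Ideal.span (gens k A₀)

variable {k A₀}

lemma mem_add (a b : A₀) (n : ℕ) :
    X (a + b, n) - X (a, n) - X (b, n) ∈ I k A₀ :=
  Ideal.subset_span (Or.inl (Or.inl ⟨a, b, n, rfl⟩))

lemma mem_mul (a b : A₀) (n : ℕ) :
    X (a * b, n) - ∑ q ∈ Finset.HasAntidiagonal.antidiagonal n, X (a, q.1) * X (b, q.2) ∈ I k A₀ :=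
  Ideal.subset_span (Or.inl (Or.inr ⟨a, b, n, rfl⟩))

lemma mem_alg (c : k) (n : ℕ) :
    X (algebraMap k A₀ c, n) - (if n = 0 then C c else 0) ∈ I k A₀ :=
  Ideal.subset_span (Or.inr ⟨c, n, rfl⟩)

variable {R : Type u} [CommRing R] [Algebra k R]

lemma g_eq (g : MvPolynomial (A₀ × ℕ) k ⧸ I k A₀ →ₐ[k] R)
    {x y : MvPolynomial (A₀ × ℕ) k} (h : x - y ∈ I k A₀) :
    g (Ideal.Quotient.mk (I k A₀) x) = g (Ideal.Quotient.mk (I k A₀) y) := by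
  congr 1
  exact Ideal.Quotient.eq.mpr h

lemma g_add (g : MvPolynomial (A₀ × ℕ) k ⧸ I k A₀ →ₐ[k] R) (a b : A₀) (n : ℕ) :
    g (Ideal.Quotient.mk (I k A₀) (X (a + b, n))) =
      g (Ideal.Quotient.mk (I k A₀) (X (a, n))) +
        g (Ideal.Quotient.mk (I k A₀) (X (b, n))) := by
  have h2 : Ideal.Quotient.mk (I k A₀) (X (a + b, n)) =
      Ideal.Quotient.mk (I k A₀) (X (a, n)) + Ideal.Quotient.mk (I k A₀) (X (b, n)) := by
    rw [← map_add]
    exact Ideal.Quotient.eq.mpr (by rw [sub_add_eq_sub_sub]; exact mem_add a b n)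
  rw [h2, map_add]

lemma g_mul (g : MvPolynomial (A₀ × ℕ) k ⧸ I k A₀ →ₐ[k] R) (a b : A₀) (n : ℕ) :
    g (Ideal.Quotient.mk (I k A₀) (X (a * b, n))) =
      ∑ q ∈ Finset.HasAntidiagonal.antidiagonal n,
        g (Ideal.Quotient.mk (I k A₀) (X (a, q.1))) *
          g (Ideal.Quotient.mk (I k A₀) (X (b, q.2))) := by
  have h2 : Ideal.Quotient.mk (I k A₀) (X (a * b, n)) =
      ∑ q ∈ Finset.HasAntidiagonal.antidiagonal n,
        Ideal.Quotient.mk (I k A₀) (X (a, q.1)) * Ideal.Quotient.mk (I k A₀) (X (b, q.2)) := by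
    rw [← Finset.sum_congr rfl fun q _ =>
      (map_mul (Ideal.Quotient.mk (I k A₀)) (X (a, q.1)) (X (b, q.2))), ← map_sum]
    exact Ideal.Quotient.eq.mpr (mem_mul a b n)
  rw [h2, map_sum]
  simp only [map_mul]

lemma g_alg (g : MvPolynomial (A₀ × ℕ) k ⧸ I k A₀ →ₐ[k] R) (c : k) (n : ℕ) :
    g (Ideal.Quotient.mk (I k A₀) (X (algebraMap k A₀ c, n))) =
      if n = 0 then algebraMap k R c else 0 := by
  rcases eq_or_ne n 0 with hn | hn
  · subst hn
    have h2 : Ideal.Quotient.mk (I k A₀) (X (algebraMap k A₀ c, 0)) =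
        Ideal.Quotient.mk (I k A₀) (C c) := Ideal.Quotient.eq.mpr (by
      simpa using mem_alg c 0)
    have h3 : (Ideal.Quotient.mk (I k A₀)) (C c : MvPolynomial (A₀ × ℕ) k) =
        algebraMap k (MvPolynomial (A₀ × ℕ) k ⧸ I k A₀) c := rfl
    rw [h2, h3, g.commutes, if_pos rfl]
  · have h2 : Ideal.Quotient.mk (I k A₀) (X (algebraMap k A₀ c, n)) =
        Ideal.Quotient.mk (I k A₀) 0 := Ideal.Quotient.eq.mpr (by
      simpa [hn] using mem_alg c n)
    rw [h2, map_zero, map_zero, if_neg hn]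

/-- Forward direction: from a `k`-algebra map out of the quotient, build the arc. -/
noncomputable def fwd (g : MvPolynomial (A₀ × ℕ) k ⧸ I k A₀ →ₐ[k] R) :
    A₀ →ₐ[k] PowerSeries R where
  toFun a := PowerSeries.mk fun n => g (Ideal.Quotient.mk (I k A₀) (X (a, n)))
  map_one' := by
    refine PowerSeries.ext fun n => ?_
    have h := g_alg g 1 n
    rw [map_one] at h
    simp [PowerSeries.coeff_mk, PowerSeries.coeff_one, h]
  map_mul' a b := by
    refine PowerSeries.ext fun n => ?_
    simp [PowerSeries.coeff_mk, PowerSeries.coeff_mul, g_mul g a b n]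
  map_zero' := by
    refine PowerSeries.ext fun n => ?_
    have h := g_alg g 0 n
    rw [map_zero] at h
    simp [PowerSeries.coeff_mk, h]
  map_add' a b := by
    refine PowerSeries.ext fun n => ?_
    simp [PowerSeries.coeff_mk, g_add g a b n]
  commutes' c := by
    refine PowerSeries.ext fun n => ?_
    rw [PowerSeries.algebraMap_apply]
    simp [PowerSeries.coeff_mk, PowerSeries.coeff_C, g_alg g c n]

lemma fwd_coeff (g : MvPolynomial (A₀ × ℕ) k ⧸ I k A₀ →ₐ[k] R) (a : A₀) (n : ℕ) :
    PowerSeries.coeff n (fwd g a) = g (Ideal.Quotient.mk (I k A₀) (X (a, n))) := by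
  simp [fwd, PowerSeries.coeff_mk]

lemma aeval_vanish (f : A₀ →ₐ[k] PowerSeries R) :
    ∀ p ∈ I k A₀, aeval (fun q : A₀ × ℕ => PowerSeries.coeff q.2 (f q.1)) p = 0 := by
  intro p hp
  refine Submodule.span_induction ?_ ?_ ?_ ?_ hp
  · rintro q ((hq | hq) | hq)
    · obtain ⟨a, b, n, rfl⟩ := hq
      simp [map_add]
    · obtain ⟨a, b, n, rfl⟩ := hq
      simp [map_mul, PowerSeries.coeff_mul]
    · obtain ⟨c, n, rfl⟩ := hq
      have hc : f (algebraMap k A₀ c) = PowerSeries.C (algebraMap k R c) := by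
        rw [f.commutes, PowerSeries.algebraMap_apply]
      rcases eq_or_ne n 0 with hn | hn
      · subst hn
        simp [hc, PowerSeries.coeff_C, MvPolynomial.algebraMap_eq, Algebra.smul_def]
      · simp [hc, PowerSeries.coeff_C, hn]
  · simp
  · intro x y _ _ hx hy; simp [map_add, hx, hy]
  · intro r x _ hx; simp [hx]

/-- Backward direction. -/
noncomputable def bwd (f : A₀ →ₐ[k] PowerSeries R) :
    MvPolynomial (A₀ × ℕ) k ⧸ I k A₀ →ₐ[k] R :=
  Ideal.Quotient.liftₐ (I k A₀)
    (aeval (fun q : A₀ × ℕ => PowerSeries.coeff q.2 (f q.1)))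
    (aeval_vanish f)

lemma bwd_mk_X (f : A₀ →ₐ[k] PowerSeries R) (a : A₀) (n : ℕ) :
    bwd f (Ideal.Quotient.mk (I k A₀) (X (a, n))) = PowerSeries.coeff n (f a) := by
  simp [bwd, Ideal.Quotient.liftₐ_apply, Ideal.Quotient.lift_mk]
  exact aeval_X _ _

noncomputable def equivFun (R : Type u) [CommRing R] [Algebra k R] :
    (MvPolynomial (A₀ × ℕ) k ⧸ I k A₀ →ₐ[k] R) ≃ (A₀ →ₐ[k] PowerSeries R) where
  toFun := fwd
  invFun := bwd
  left_inv g := by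
    apply Ideal.Quotient.algHom_ext
    apply MvPolynomial.algHom_ext
    rintro ⟨a, n⟩
    have hmk : (Ideal.Quotient.mkₐ k (I k A₀)) (X (a, n)) =
        Ideal.Quotient.mk (I k A₀) (X (a, n)) := rfl
    simp only [AlgHom.comp_apply, hmk, bwd_mk_X, fwd_coeff]
  right_inv f := by
    refine AlgHom.ext fun a => PowerSeries.ext fun n => ?_
    rw [fwd_coeff, bwd_mk_X]

end ArcSpaceAux

/-- for a field `k` and a finitely generated commutative `k`-algebra `A₀`,
the functor `R ↦ Hom_{k-alg}(A₀, R[[t]])` on commutative `k`-algebras is corepresentable: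
there is a commutative `k`-algebra `A∞` together with bijections
`Hom_{k-alg}(A∞, R) ≃ Hom_{k-alg}(A₀, R[[t]])` natural in `R` (naturality being expressed
via the coefficientwise action of a homomorphism `R → R'` on power series).
This expresses that the arc space `𝔏(X)` of the affine `k`-variety `X = Spec A₀` is an
affine `k`-scheme representing the functor `R ↦ X(R[[t]])`. -/
theorem arc_space_corepresentable (k : Type u) [Field k] (A₀ : Type u) [CommRing A₀]
    [Algebra k A₀] (hfg : Algebra.FiniteType k A₀) :
    ∃ (A : Type u) (_ : CommRing A) (_ : Algebra k A),
      ∃ e : (R : Type u) → [inst : CommRing R] → [inst' : Algebra k R] →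
          ((A →ₐ[k] R) ≃ (A₀ →ₐ[k] PowerSeries R)),
        ∀ (R R' : Type u) [CommRing R] [Algebra k R] [CommRing R'] [Algebra k R']
          (f : R →ₐ[k] R') (g : A →ₐ[k] R) (a : A₀),
            e R' (f.comp g) a = PowerSeries.map f.toRingHom (e R g a) := by
  refine ⟨MvPolynomial (A₀ × ℕ) k ⧸ ArcSpaceAux.I k A₀, inferInstance, inferInstance,
    fun R _ _ => ArcSpaceAux.equivFun R, ?_⟩
  intro R R' _ _ _ _ f g a
  refine PowerSeries.ext fun n => ?_
  rw [PowerSeries.coeff_map]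
  show PowerSeries.coeff n (ArcSpaceAux.fwd (f.comp g) a) =
    f (PowerSeries.coeff n (ArcSpaceAux.fwd g a))
  rw [ArcSpaceAux.fwd_coeff, ArcSpaceAux.fwd_coeff]
  rfl
end

section
/- Let k be a field, d ≥ 1, N ≥ 0, and let I be an ideal of the polynomial ring k[x₁,…,x_d]; set A₀ = k[x₁,…,x_d]/I. Then the functor from commutative k-algebras to sets given by R ↦ { φ ∈ Hom_{k-alg}(A₀, R((t))) : t^N·φ(x̄_i) ∈ R[[t]] for i = 1,…,d }, with functoriality induced by applying a ring homomorphism R → R' coefficientwise to Laurent series, is corepresentable by a commutative k-algebra. (This is the representability of the subfunctor X^{(N)} of X((t)), consisting of points of the affine variety X = Spec A₀ over R((t)) whose coordinates have poles of order at most N.) -/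
open MvPolynomial

universe u

namespace PoleAux

noncomputable section

variable {k : Type u} [Field k]
variable {R S : Type u} [CommRing R] [Algebra k R] [CommRing S] [Algebra k S]

lemma ofPowerSeries_coeff_neg {n : ℤ} (hn : n < 0) (s : PowerSeries R) :
    (HahnSeries.ofPowerSeries ℤ R s).coeff n = 0 := by
  rw [HahnSeries.ofPowerSeries_apply]
  apply HahnSeries.embDomain_notin_range
  rintro ⟨m, hm⟩
  have : (m : ℤ) = n := hm
  omega

lemma map_ofPowerSeries (f : R →+* S) (s : PowerSeries R) :
    (HahnSeries.ofPowerSeries ℤ R s).map f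
      = HahnSeries.ofPowerSeries ℤ S (PowerSeries.map f s) := by
  ext n
  rcases lt_or_ge n 0 with h | h
  · rw [HahnSeries.map_coeff, ofPowerSeries_coeff_neg h, ofPowerSeries_coeff_neg h, map_zero]
  · lift n to ℕ using h
    rw [HahnSeries.map_coeff, HahnSeries.ofPowerSeries_apply_coeff,
      HahnSeries.ofPowerSeries_apply_coeff, PowerSeries.coeff_map]

/-- Coefficientwise action of a `k`-algebra map on Laurent series, as a `k`-algebra map. -/
def mapAlg (f : R →ₐ[k] S) : LaurentSeries R →ₐ[k] LaurentSeries S where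
  toFun x := x.map f.toRingHom
  map_one' := HahnSeries.map_one f.toRingHom.toMonoidWithZeroHom
  map_mul' x y := HahnSeries.map_mul f.toRingHom.toNonUnitalRingHom
  map_zero' := by ext; simp
  map_add' x y := HahnSeries.map_add f.toRingHom.toAddMonoidHom
  commutes' c := by
    show (algebraMap k (LaurentSeries R) c).map f.toRingHom = algebraMap k (LaurentSeries S) c
    show (HahnSeries.ofPowerSeries ℤ R (algebraMap k (PowerSeries R) c)).map f.toRingHom
        = HahnSeries.ofPowerSeries ℤ S (algebraMap k (PowerSeries S) c)
    rw [map_ofPowerSeries]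
    congr 1
    rw [PowerSeries.algebraMap_apply, PowerSeries.algebraMap_apply, PowerSeries.map_C]
    exact congrArg _ (f.commutes c)

@[simp] lemma mapAlg_apply (f : R →ₐ[k] S) (x : LaurentSeries R) :
    mapAlg f x = x.map f.toRingHom := rfl

variable (N : ℕ) {d : ℕ}

/-- The universal Laurent series with pole order at most `N` and coefficients `a (i, 0), a (i, 1), …`. -/
def ser (a : Fin d × ℕ → R) (i : Fin d) : LaurentSeries R :=
  HahnSeries.single (-(N : ℤ)) 1 *
    HahnSeries.ofPowerSeries ℤ R (PowerSeries.mk fun n => a (i, n))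

lemma map_single_one (f : R →ₐ[k] S) (m : ℤ) :
    (HahnSeries.single m (1 : R)).map f.toRingHom = HahnSeries.single m (1 : S) := by
  ext n
  rcases eq_or_ne n m with rfl | h
  · simp [HahnSeries.map_coeff]
  · simp [HahnSeries.map_coeff, HahnSeries.coeff_single_of_ne h]

lemma mapAlg_ser (f : R →ₐ[k] S) (a : Fin d × ℕ → R) (i : Fin d) :
    mapAlg f (ser N a i) = ser N (fun q => f (a q)) i := by
  have h1 : (PowerSeries.map f.toRingHom) (PowerSeries.mk fun n => a (i, n))
      = PowerSeries.mk fun n => f (a (i, n)) := by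
    ext n
    simp [PowerSeries.coeff_map, PowerSeries.coeff_mk]
  rw [ser, ser, map_mul (mapAlg f),
    show mapAlg f (HahnSeries.single (-(N : ℤ)) (1 : R)) = HahnSeries.single (-(N : ℤ)) (1 : S)
      from map_single_one f _, mapAlg_apply, map_ofPowerSeries, h1]

lemma single_mul_ser (a : Fin d × ℕ → R) (i : Fin d) :
    HahnSeries.single (N : ℤ) (1 : R) * ser N a i
      = HahnSeries.ofPowerSeries ℤ R (PowerSeries.mk fun n => a (i, n)) := by
  rw [ser, ← mul_assoc, HahnSeries.single_mul_single, add_neg_cancel, one_mul,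
    HahnSeries.single_zero_one, one_mul]

lemma single_neg_mul_single (x : LaurentSeries R) :
    HahnSeries.single (-(N : ℤ)) (1 : R) * (HahnSeries.single (N : ℤ) (1 : R) * x) = x := by
  rw [← mul_assoc, HahnSeries.single_mul_single, neg_add_cancel, one_mul,
    HahnSeries.single_zero_one, one_mul]

lemma mapAlg_aeval (F : R →ₐ[k] S) (a : Fin d × ℕ → R) (p : MvPolynomial (Fin d) k) :
    mapAlg F (aeval (ser N a) p) = aeval (ser N fun q => F (a q)) p := by
  calc mapAlg F (aeval (ser N a) p) = ((mapAlg F).comp (aeval (ser N a))) p := rfl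
    _ = aeval (fun i => mapAlg F (ser N a i)) p := by rw [comp_aeval]
    _ = _ := by simp only [mapAlg_ser]

section Main

variable (k) (d) (I : Ideal (MvPolynomial (Fin d) k))

/-- The ideal of relations among the universal coefficients. -/
def J : Ideal (MvPolynomial (Fin d × ℕ) k) :=
  Ideal.span {c | ∃ f ∈ I, ∃ m : ℤ,
    c = ((aeval (ser N (fun q => (X q : MvPolynomial (Fin d × ℕ) k)))) f).coeff m}

/-- The corepresenting algebra. -/
abbrev Arep : Type u := MvPolynomial (Fin d × ℕ) k ⧸ J k N d I

variable {k d I}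

/-- The coefficient family attached to an algebra map out of `Arep`. -/
def yOf (g : Arep k N d I →ₐ[k] R) : Fin d × ℕ → R :=
  fun q => g (Ideal.Quotient.mkₐ k (J k N d I) (X q))

lemma fw_vanish (g : Arep k N d I →ₐ[k] R) :
    ∀ f ∈ I, aeval (ser N (yOf N g)) f = 0 := by
  intro f hf
  have key := mapAlg_aeval N (g.comp (Ideal.Quotient.mkₐ k (J k N d I)))
    (fun q => (X q : MvPolynomial (Fin d × ℕ) k)) f
  have hy : (fun q => (g.comp (Ideal.Quotient.mkₐ k (J k N d I)))
      (X q : MvPolynomial (Fin d × ℕ) k)) = yOf N g := rfl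
  rw [hy] at key
  rw [← key]
  ext m
  rw [mapAlg_apply, HahnSeries.map_coeff]
  show (g.comp (Ideal.Quotient.mkₐ k (J k N d I))) _ = HahnSeries.coeff 0 m
  rw [HahnSeries.coeff_zero, AlgHom.comp_apply]
  have hmem : ((aeval (ser N (fun q => (X q : MvPolynomial (Fin d × ℕ) k)))) f).coeff m
      ∈ J k N d I := Ideal.subset_span ⟨f, hf, m, rfl⟩
  have h0 : (Ideal.Quotient.mkₐ k (J k N d I))
      (((aeval (ser N (fun q => (X q : MvPolynomial (Fin d × ℕ) k)))) f).coeff m) = 0 :=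
    Ideal.Quotient.eq_zero_iff_mem.mpr hmem
  exact (congrArg g h0).trans (map_zero g)

/-- Forward map of the equivalence. -/
def fw (g : Arep k N d I →ₐ[k] R) :
    (MvPolynomial (Fin d) k ⧸ I) →ₐ[k] LaurentSeries R :=
  Ideal.Quotient.liftₐ I (aeval (ser N (yOf N g))) (fw_vanish N g)

lemma fw_mk (g : Arep k N d I →ₐ[k] R) (p : MvPolynomial (Fin d) k) :
    fw N g (Ideal.Quotient.mk I p) = aeval (ser N (yOf N g)) p := by
  simp [fw, Ideal.Quotient.liftₐ_apply, Ideal.Quotient.lift_mk]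
  rfl

lemma fw_cond (g : Arep k N d I →ₐ[k] R) (i : Fin d) :
    HahnSeries.single (N : ℤ) (1 : R) * fw N g (Ideal.Quotient.mk I (X i))
      ∈ Set.range (HahnSeries.ofPowerSeries ℤ R) := by
  rw [fw_mk, aeval_X, single_mul_ser]
  exact ⟨_, rfl⟩

variable (φ : (MvPolynomial (Fin d) k ⧸ I) →ₐ[k] LaurentSeries R)
variable (h : ∀ i : Fin d, HahnSeries.single (N : ℤ) (1 : R) *
    φ (Ideal.Quotient.mk I (X i)) ∈ Set.range (HahnSeries.ofPowerSeries ℤ R))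

/-- Coefficients attached to a point with bounded poles. -/
def coeffOf : Fin d × ℕ → R :=
  fun q => PowerSeries.coeff q.2 (Classical.choose (h q.1))

lemma ser_coeffOf (i : Fin d) :
    ser N (coeffOf N φ h) i = φ (Ideal.Quotient.mk I (X i)) := by
  have hs := Classical.choose_spec (h i)
  have hmk : PowerSeries.mk (fun n => coeffOf N φ h (i, n)) = Classical.choose (h i) := by
    ext n
    simp [coeffOf, PowerSeries.coeff_mk]
  rw [ser, hmk, hs, single_neg_mul_single]

lemma aeval_ser_coeffOf :
    (aeval (ser N (coeffOf N φ h)) : MvPolynomial (Fin d) k →ₐ[k] LaurentSeries R)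
      = φ.comp (Ideal.Quotient.mkₐ k I) := by
  apply MvPolynomial.algHom_ext
  intro i
  simp [ser_coeffOf N φ h i]

lemma bw_vanish : ∀ c ∈ J k N d I, aeval (coeffOf N φ h) c = 0 := by
  intro c hc
  have hle : J k N d I ≤ RingHom.ker (aeval (coeffOf N φ h) :
      MvPolynomial (Fin d × ℕ) k →ₐ[k] R).toRingHom := by
    rw [J, Ideal.span_le]
    rintro _ ⟨f, hf, m, rfl⟩
    have key := mapAlg_aeval N (aeval (coeffOf N φ h) :
        MvPolynomial (Fin d × ℕ) k →ₐ[k] R)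
      (fun q => (X q : MvPolynomial (Fin d × ℕ) k)) f
    have hcoeff : (aeval (coeffOf N φ h))
        (((aeval (ser N (fun q => (X q : MvPolynomial (Fin d × ℕ) k)))) f).coeff m)
        = ((aeval (ser N fun q => (aeval (coeffOf N φ h) : MvPolynomial (Fin d × ℕ) k →ₐ[k] R)
              (X q)) : MvPolynomial (Fin d) k →ₐ[k] LaurentSeries R) f).coeff m := by
      rw [← key, mapAlg_apply, HahnSeries.map_coeff]
      rfl
    show (aeval (coeffOf N φ h)) _ = 0
    rw [hcoeff]
    have : (fun q => (aeval (coeffOf N φ h) : MvPolynomial (Fin d × ℕ) k →ₐ[k] R) (X q))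
        = coeffOf N φ h := by
      funext q; simp
    rw [this, aeval_ser_coeffOf N φ h, AlgHom.comp_apply,
      show Ideal.Quotient.mkₐ k I f = 0 from Ideal.Quotient.eq_zero_iff_mem.mpr hf,
      map_zero, HahnSeries.coeff_zero]
  exact hle hc

/-- Backward map of the equivalence. -/
def bw : Arep k N d I →ₐ[k] R :=
  Ideal.Quotient.liftₐ (J k N d I) (aeval (coeffOf N φ h)) (bw_vanish N φ h)

lemma bw_mk (p : MvPolynomial (Fin d × ℕ) k) :
    bw N φ h (Ideal.Quotient.mkₐ k (J k N d I) p) = aeval (coeffOf N φ h) p := by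
  show Ideal.Quotient.liftₐ (J k N d I) (aeval (coeffOf N φ h)) (bw_vanish N φ h)
      (Ideal.Quotient.mk (J k N d I) p) = _
  rw [Ideal.Quotient.liftₐ_apply]
  rfl

lemma bw_fw (g : Arep k N d I →ₐ[k] R) :
    bw N (fw N g) (fw_cond N g) = g := by
  apply Ideal.Quotient.algHom_ext
  apply MvPolynomial.algHom_ext
  intro q
  rw [AlgHom.comp_apply, AlgHom.comp_apply, bw_mk]
  have hs := Classical.choose_spec (fw_cond N g q.1)
  have h2 : HahnSeries.single (N : ℤ) (1 : R) * fw N g (Ideal.Quotient.mk I (X q.1))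
      = HahnSeries.ofPowerSeries ℤ R (PowerSeries.mk fun n => yOf N g (q.1, n)) := by
    rw [fw_mk, aeval_X, single_mul_ser]
  have hchoose : Classical.choose (fw_cond N g q.1)
      = PowerSeries.mk fun n => yOf N g (q.1, n) :=
    HahnSeries.ofPowerSeries_injective (hs.trans h2)
  rw [aeval_X]
  show PowerSeries.coeff q.2 (Classical.choose (fw_cond N g q.1)) = _
  rw [hchoose, PowerSeries.coeff_mk]
  rfl

lemma fw_bw : fw N (bw N φ h) = φ := by
  apply Ideal.Quotient.algHom_ext
  apply MvPolynomial.algHom_ext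
  intro i
  rw [AlgHom.comp_apply, AlgHom.comp_apply]
  show fw N (bw N φ h) (Ideal.Quotient.mk I (X i)) = _
  rw [fw_mk, aeval_X]
  have hy : yOf N (bw N φ h) = coeffOf N φ h := by
    funext q
    rw [yOf, bw_mk, aeval_X]
  rw [hy, ser_coeffOf]
  rfl

variable (R) in
/-- The corepresenting equivalence. -/
noncomputable def theEquiv :
    (Arep k N d I →ₐ[k] R) ≃
      { ψ : (MvPolynomial (Fin d) k ⧸ I) →ₐ[k] LaurentSeries R //
        ∀ i : Fin d, HahnSeries.single (N : ℤ) (1 : R) *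
            ψ (Ideal.Quotient.mk I (X i)) ∈
          Set.range (HahnSeries.ofPowerSeries ℤ R) } where
  toFun g := ⟨fw N g, fw_cond N g⟩
  invFun ψ := bw N ψ.1 ψ.2
  left_inv g := bw_fw N g
  right_inv ψ := Subtype.ext (fw_bw N ψ.1 ψ.2)

lemma fw_natural (f : R →ₐ[k] S) (g : Arep k N d I →ₐ[k] R)
    (a : MvPolynomial (Fin d) k ⧸ I) :
    fw N (f.comp g) a = HahnSeries.map (fw N g a) f.toRingHom := by
  obtain ⟨p, rfl⟩ := Ideal.Quotient.mk_surjective a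
  rw [fw_mk, fw_mk, ← mapAlg_apply, mapAlg_aeval]
  rfl

end Main

end

end PoleAux


/-- for a field `k`, `d ≥ 1`, `N ≥ 0` and an ideal `I` of `k[x₁,…,x_d]`,
with `A₀ = k[x₁,…,x_d]/I`, the functor on commutative `k`-algebras
`R ↦ { φ ∈ Hom_{k-alg}(A₀, R((t))) : t^N·φ(x̄_i) ∈ R[[t]] for all i }`
(the points of `X = Spec A₀` over `R((t))` with poles of order at most `N`)
is corepresentable by a commutative `k`-algebra, naturally in `R` (naturality being
expressed via the coefficientwise action of a homomorphism `R → R'` on Laurent series). -/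
theorem pole_order_functor_corepresentable (k : Type u) [Field k] (d N : ℕ) (hd : 1 ≤ d)
    (I : Ideal (MvPolynomial (Fin d) k)) :
    ∃ (A : Type u) (_ : CommRing A) (_ : Algebra k A),
      ∃ e : (R : Type u) → [inst : CommRing R] → [inst' : Algebra k R] →
          ((A →ₐ[k] R) ≃
            { φ : (MvPolynomial (Fin d) k ⧸ I) →ₐ[k] LaurentSeries R //
              ∀ i : Fin d, HahnSeries.single (N : ℤ) (1 : R) *
                  φ (Ideal.Quotient.mk I (X i)) ∈
                Set.range (HahnSeries.ofPowerSeries ℤ R) }),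
        ∀ (R R' : Type u) [CommRing R] [Algebra k R] [CommRing R'] [Algebra k R']
          (f : R →ₐ[k] R') (g : A →ₐ[k] R) (a : MvPolynomial (Fin d) k ⧸ I),
            ((e R' (f.comp g) : Subtype _) : _ →ₐ[k] LaurentSeries R') a =
              HahnSeries.map (((e R g : Subtype _) : _ →ₐ[k] LaurentSeries R) a)
                f.toRingHom := by
  refine ⟨PoleAux.Arep k N d I, inferInstance, inferInstance,
    fun R _ _ => PoleAux.theEquiv R N (I := I), ?_⟩
  intro R R' _ _ _ _ f g a
  exact PoleAux.fw_natural N (I := I) f g a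
end
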